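/- Let T be a bounded linear operator on a complex Hilbert space H, let M be a closed T-invariant subspace, and write T as the upper triangular operator matrix with diagonal (A₁, A₂) relative to H = M ⊕ M^⊥, where A₁ = T|_M and A₂ is the compression of T to M^⊥. If σ_w(A₁) ⊆ σ_w(T), then σ(T) = σ(A₁) ∪ σ(A₂). -/

import Mathlib

open Metric Filter NormedSpace
open scoped Classical ENNReal

variable {X : Type*} [NormedAddCommGroup X] [NormedSpace ℂ X]

/-- The restriction of `T` to an invariant subspace `M`, as an operator on `M`. -/
def restrictCLM (T : X →L[ℂ] X) (M : Submodule ℂ X) (hM : ∀ x ∈ M, T x ∈ M) :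
    M →L[ℂ] M :=
  { toLinearMap := (T : X →ₗ[ℂ] X).restrict hM
    cont := Continuous.subtype_mk (T.continuous.comp continuous_subtype_val) _ }

/-- `T` is Fredholm: closed range, finite-dimensional kernel and cokernel. -/
def IsFredholm (T : X →L[ℂ] X) : Prop :=
  IsClosed (LinearMap.range (T : X →ₗ[ℂ] X) : Set X) ∧
    FiniteDimensional ℂ (LinearMap.ker (T : X →ₗ[ℂ] X)) ∧ FiniteDimensional ℂ (X ⧸ LinearMap.range (T : X →ₗ[ℂ] X))

/-- `T` is Weyl: Fredholm of index zero. -/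
def IsWeyl (T : X →L[ℂ] X) : Prop :=
  IsFredholm T ∧
    Module.finrank ℂ (LinearMap.ker (T : X →ₗ[ℂ] X)) = Module.finrank ℂ (X ⧸ LinearMap.range (T : X →ₗ[ℂ] X))

/-- The Weyl spectrum `σ_w(T) = {lam ∈ σ(T) : T - lam is not Fredholm of index 0}`. -/
def weylSpectrum (T : X →L[ℂ] X) : Set ℂ :=
  {lam : ℂ | lam ∈ spectrum ℂ T ∧ ¬ IsWeyl (T - lam • 1)}

/-- The compression of `T` to the orthogonal complement `Mᗮ` of a closed subspace `M`
of a Hilbert space: `A₂ = P_{Mᗮ} T |_{Mᗮ}`, the second diagonal entry of the upper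
triangular operator matrix of `T` relative to `H = M ⊕ Mᗮ`. -/
noncomputable def compressionPerp {H : Type*} [NormedAddCommGroup H]
    [InnerProductSpace ℂ H] [CompleteSpace H] (T : H →L[ℂ] H) (M : Submodule ℂ H)
    (hM : IsClosed (M : Set H)) : Mᗮ →L[ℂ] Mᗮ :=
  haveI : CompleteSpace M := hM.completeSpace_coe
  (Submodule.orthogonalProjectionOnto Mᗮ).comp (T.comp Mᗮ.subtypeL)

/-- On a complete space, `lam` is outside the spectrum iff `T - lam` is bijective. -/
lemma notMem_spectrum_iff_bijective' {E : Type*} [NormedAddCommGroup E] [NormedSpace ℂ E]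
    [CompleteSpace E] (T : E →L[ℂ] E) (lam : ℂ) :
    lam ∉ spectrum ℂ T ↔ Function.Bijective (T - lam • (1 : E →L[ℂ] E)) := by
  rw [spectrum.notMem_iff, Algebra.algebraMap_eq_smul_one, ← neg_sub,
    IsUnit.neg_iff, ContinuousLinearMap.isUnit_iff_bijective]

/-- Let `T` be an operator on a complex Hilbert space, `M` a closed `T`-invariant
subspace, and let `(A₁, A₂)` be the diagonal of the upper triangular operator matrix
of `T` relative to `H = M ⊕ Mᗮ` (`A₁ = T|_M`, `A₂` the compression of `T` to `Mᗮ`).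
If `σ_w(A₁) ⊆ σ_w(T)` then `σ(T) = σ(A₁) ∪ σ(A₂)`. -/
theorem spectrum_eq_union_of_weyl_restrict_subset
    {H : Type*} [NormedAddCommGroup H] [InnerProductSpace ℂ H] [CompleteSpace H]
    (T : H →L[ℂ] H) (M : Submodule ℂ H) (hMc : IsClosed (M : Set H))
    (hMi : ∀ x ∈ M, T x ∈ M)
    (hw : weylSpectrum (restrictCLM T M hMi) ⊆ weylSpectrum T) :
    spectrum ℂ T =
      spectrum ℂ (restrictCLM T M hMi) ∪ spectrum ℂ (compressionPerp T M hMc) := by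
  haveI : CompleteSpace M := hMc.completeSpace_coe
  haveI : CompleteSpace ↥Mᗮ := M.isClosed_orthogonal.completeSpace_coe
  set A₁ := restrictCLM T M hMi with hA₁def
  set A₂ := compressionPerp T M hMc with hA₂def
  ext lam
  simp only [Set.mem_union]
  rw [← not_iff_not]
  push_neg
  rw [notMem_spectrum_iff_bijective', notMem_spectrum_iff_bijective',
    notMem_spectrum_iff_bijective']
  set S := T - lam • (1 : H →L[ℂ] H) with hSdef
  set S₁ := A₁ - lam • (1 : ↥M →L[ℂ] ↥M) with hS₁def
  set S₂ := A₂ - lam • (1 : ↥Mᗮ →L[ℂ] ↥Mᗮ) with hS₂def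
  -- basic pointwise descriptions
  have hR1 : ∀ m : M, (S₁ m : H) = S (m : H) := by
    intro m
    simp [hSdef, hS₁def, hA₁def, restrictCLM, ContinuousLinearMap.sub_apply]
    rfl
  have hSM : ∀ x ∈ M, S x ∈ M := by
    intro x hx
    exact M.sub_mem (hMi x hx) (M.smul_mem lam hx)
  have hPM0 : ∀ x : H, x ∈ M → Submodule.orthogonalProjectionOnto Mᗮ x = 0 := fun x hx =>
    Submodule.orthogonalProjectionOnto_apply_of_mem_orthogonal
      (M.le_orthogonal_orthogonal hx)
  have hPmemM : ∀ x : H, Submodule.orthogonalProjectionOnto Mᗮ x = 0 → x ∈ M := by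
    intro x hx
    have hd : (Submodule.orthogonalProjectionOnto M x : H) + (Submodule.orthogonalProjectionOnto Mᗮ x : H) = x :=
      M.starProjection_add_starProjection_orthogonal x
    rw [← hd]
    have : ((Submodule.orthogonalProjectionOnto Mᗮ x : ↥Mᗮ) : H) = 0 := by rw [hx]; rfl
    rw [this, add_zero]
    exact (Submodule.orthogonalProjectionOnto M x).2
  have hR2 : ∀ p : ↥Mᗮ, S₂ p = Submodule.orthogonalProjectionOnto Mᗮ (S (p : H)) := by
    intro p
    simp [hSdef, hS₂def, hA₂def, compressionPerp, ContinuousLinearMap.sub_apply, map_sub,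
      map_smul, Submodule.orthogonalProjectionOnto_mem_subspace_eq_self]
  have hMinter : ∀ x : H, x ∈ M → x ∈ Mᗮ → x = 0 := by
    intro x hxM hxP
    have := (Submodule.mem_orthogonal M x).mp hxP x hxM
    rwa [inner_self_eq_zero] at this
  constructor
  · -- hard direction: S bijective ⟹ S₁ and S₂ bijective
    intro hS
    -- S₁ injective
    have hinj1 : Function.Injective S₁ := by
      intro m m' h
      apply Subtype.ext
      apply hS.injective
      rw [← hR1 m, ← hR1 m', h]
    -- S₁ surjective, using the Weyl hypothesis
    have hsurj1 : Function.Surjective S₁ := by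
      by_contra hns
      have hmem : lam ∈ weylSpectrum A₁ := by
        refine ⟨?_, ?_⟩
        · by_contra h'
          exact hns ((notMem_spectrum_iff_bijective' A₁ lam).mp h').surjective
        · rintro ⟨⟨-, -, hfin⟩, hrank⟩
          have hker : LinearMap.ker (S₁ : ↥M →ₗ[ℂ] ↥M) = ⊥ := LinearMap.ker_eq_bot.mpr hinj1
          rw [hker, finrank_bot] at hrank
          haveI := hfin
          have hsub : Subsingleton (↥M ⧸ LinearMap.range (S₁ : ↥M →ₗ[ℂ] ↥M)) :=
            Module.finrank_zero_iff.mp hrank.symm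
          have : LinearMap.range (S₁ : ↥M →ₗ[ℂ] ↥M) = ⊤ :=
            Submodule.Quotient.subsingleton_iff.mp hsub
          exact hns (LinearMap.range_eq_top.mp this)
      have hT := hw hmem
      exact (notMem_spectrum_iff_bijective' T lam).mpr hS hT.1
    refine ⟨⟨hinj1, hsurj1⟩, ?_, ?_⟩
    · -- S₂ injective
      intro p p' h
      have hz : S₂ (p - p') = 0 := by rw [map_sub, h, sub_self]
      rw [hR2] at hz
      have hmemM : S ((p - p' : ↥Mᗮ) : H) ∈ M := hPmemM _ hz
      obtain ⟨m, hm⟩ := hsurj1 ⟨S ((p - p' : ↥Mᗮ) : H), hmemM⟩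
      have hmc : (S₁ m : H) = S ((p - p' : ↥Mᗮ) : H) := by rw [hm]
      rw [hR1] at hmc
      have heq : (m : H) = ((p - p' : ↥Mᗮ) : H) := hS.injective hmc
      have hpm : ((p - p' : ↥Mᗮ) : H) = 0 := by
        refine hMinter _ ?_ (p - p').2
        rw [← heq]; exact m.2
      have : p - p' = 0 := Subtype.ext hpm
      exact sub_eq_zero.mp this
    · -- S₂ surjective
      intro y
      obtain ⟨x, hx⟩ := hS.surjective (y : H)
      refine ⟨Submodule.orthogonalProjectionOnto Mᗮ x, ?_⟩
      rw [hR2]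
      set p := Submodule.orthogonalProjectionOnto Mᗮ x with hp
      have hd : (Submodule.orthogonalProjectionOnto M x : H) + (Submodule.orthogonalProjectionOnto Mᗮ x : H) = x :=
      M.starProjection_add_starProjection_orthogonal x
      have hxm : x - (p : H) ∈ M := by
        have h' : (↑(Submodule.orthogonalProjectionOnto M x) : H) = x - (p : H) := eq_sub_of_add_eq hd
        rw [← h']; exact (Submodule.orthogonalProjectionOnto M x).2
      have : S (p : H) = (y : H) - S (x - (p : H)) := by
        rw [map_sub, hx]; abel
      rw [this, map_sub, hPM0 _ (hSM _ hxm), sub_zero,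
        Submodule.orthogonalProjectionOnto_mem_subspace_eq_self]
  · -- easy direction
    rintro ⟨hb1, hb2⟩
    have h0 : ∀ z : H, S z = 0 → z = 0 := by
      intro z hz
      set p := Submodule.orthogonalProjectionOnto Mᗮ z with hp
      have hd : (Submodule.orthogonalProjectionOnto M z : H) + (Submodule.orthogonalProjectionOnto Mᗮ z : H) = z :=
      M.starProjection_add_starProjection_orthogonal z
      have hzm : z - (p : H) ∈ M := by
        have h' : (↑(Submodule.orthogonalProjectionOnto M z) : H) = z - (p : H) := eq_sub_of_add_eq hd
        rw [← h']; exact (Submodule.orthogonalProjectionOnto M z).2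
      have hSp : S (p : H) = - S (z - (p : H)) := by
        rw [map_sub, hz]; abel
      have hp0 : S₂ p = 0 := by
        rw [hR2, hSp, map_neg, hPM0 _ (hSM _ hzm), neg_zero]
      have hpz : p = 0 := by
        apply hb2.injective
        rw [hp0, map_zero]
      have hzM : z ∈ M := by
        have : ((p : ↥Mᗮ) : H) = 0 := by rw [hpz]; rfl
        have hzz : z - 0 ∈ M := by rw [← this]; exact hzm
        simpa using hzz
      have hS1z : S₁ ⟨z, hzM⟩ = 0 := by
        apply Subtype.ext
        rw [hR1]
        simpa using hz
      have := hb1.injective (by rw [hS1z, map_zero] : S₁ ⟨z, hzM⟩ = S₁ 0)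
      simpa [Subtype.ext_iff] using this
    constructor
    · intro x x' h
      have := h0 (x - x') (by rw [map_sub, h, sub_self])
      exact sub_eq_zero.mp this
    · intro y
      obtain ⟨p, hp⟩ := hb2.surjective (Submodule.orthogonalProjectionOnto Mᗮ y)
      have hyM : y - S (p : H) ∈ M := by
        apply hPmemM
        rw [map_sub, ← hR2, hp, sub_self]
      obtain ⟨m, hm⟩ := hb1.surjective ⟨y - S (p : H), hyM⟩
      refine ⟨(m : H) + (p : H), ?_⟩
      have hmc : (S₁ m : H) = y - S (p : H) := by rw [hm]
      rw [hR1] at hmc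
      rw [map_add, hmc]
      abel
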